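/- For any z ∈ ℝ, h > 0, τ ≥ 0, c ∈ ℝ, and w, t > 0 with e^{wt} = 1 + τ/h, the composition of the two one-dimensional ReLU-flows φ_{(-w, c+τ+h)}^t ∘ φ_{(w,c)}^t (where φ_{(w,b)}^t(x) = (e^{wt}(x-b)+b)·1_{x≥b} + x·1_{x≤b}) equals x + τ for all x ≥ c + h, and equals x for all x ≤ c. -/

import Mathlib

/-- The explicit time-`t` flow map of `ẋ = w (x - b)₊`. -/
noncomputable def reluFlow (w b t x : ℝ) : ℝ :=
  if b ≤ x then Real.exp (w * t) * (x - b) + b else x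

/-- for `h > 0`, `τ ≥ 0`, `c ∈ ℝ`, `w, t > 0` with `e^{wt} = 1 + τ/h`, the
composition `φ_{(-w, c+τ+h)}ᵗ ∘ φ_{(w,c)}ᵗ` equals `x + τ` for `x ≥ c + h` and `x` for
`x ≤ c`. -/
theorem stmt1 (h τ c w t : ℝ) (hh : 0 < h) (hτ : 0 ≤ τ) (hw : 0 < w) (ht : 0 < t)
    (hwt : Real.exp (w * t) = 1 + τ / h) :
    (∀ x : ℝ, c + h ≤ x → reluFlow (-w) (c + τ + h) t (reluFlow w c t x) = x + τ) ∧
    (∀ x : ℝ, x ≤ c → reluFlow (-w) (c + τ + h) t (reluFlow w c t x) = x) := by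
  have hne : h ≠ 0 := ne_of_gt hh
  have hE : Real.exp (w * t) = (h + τ) / h := by rw [hwt]; field_simp
  have hEneg : Real.exp (-w * t) = h / (h + τ) := by
    rw [show -w * t = -(w * t) by ring, Real.exp_neg, hE]
    rw [inv_div]
  have hhτ : (0:ℝ) < h + τ := by linarith
  constructor
  · intro x hx
    have h1 : c ≤ x := by linarith
    delta reluFlow
    rw [if_pos h1]
    have h2 : c + τ + h ≤ Real.exp (w * t) * (x - c) + c := by
      rw [hE]
      rw [div_mul_eq_mul_div, ← sub_le_iff_le_add, le_div_iff₀ hh]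
      nlinarith
    rw [if_pos h2, hEneg, hE]
    field_simp
    ring
  · intro x hx
    delta reluFlow
    by_cases hcx : c ≤ x
    · have hxc : x = c := le_antisymm hx hcx
      rw [if_pos hcx, hxc]
      simp only [sub_self, mul_zero, zero_add]
      rw [if_neg (by intro hle; nlinarith)]
    · rw [if_neg hcx, if_neg (by intro hle; exact hcx (by linarith))]
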